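/- arXiv:1804.10369 — 2 statements merged into one kernel-verified Lean document; each statement's English description precedes it below -/
import Mathlib

section
/- Let θ₀, σ, θ_∞ ∈ ℂ with θ₀ ∉ ℤ, and set a = (σ − 2θ₀ − θ_∞)/4, b = (σ + 2θ₀ − θ_∞)/4 (so that b − a = θ₀), and assume a ∉ ℤ and b ∉ ℤ. Define the 2×2 matrix V₀ with entries V₁₁ = e^{πi a} Γ(−θ₀)/Γ(1−b), V₁₂ = Γ(−θ₀)/Γ(1+a), V₂₁ = e^{πi b} Γ(θ₀)/Γ(−a), V₂₂ = −Γ(θ₀)/Γ(b). Then det V₀ = 1/θ₀. -/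
open Matrix Complex

theorem stmt_8 (θ₀ σ θinf a b : ℂ)
    (hθ₀ : ∀ n : ℤ, θ₀ ≠ (n : ℂ))
    (ha : a = (σ - 2 * θ₀ - θinf) / 4)
    (hb : b = (σ + 2 * θ₀ - θinf) / 4)
    (haZ : ∀ n : ℤ, a ≠ (n : ℂ))
    (hbZ : ∀ n : ℤ, b ≠ (n : ℂ))
    (V₀ : Matrix (Fin 2) (Fin 2) ℂ)
    (hV₀ : V₀ = !![Complex.exp (Real.pi * I * a) * Complex.Gamma (-θ₀) /
        Complex.Gamma (1 - b),
      Complex.Gamma (-θ₀) / Complex.Gamma (1 + a);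
      Complex.exp (Real.pi * I * b) * Complex.Gamma θ₀ / Complex.Gamma (-a),
      -(Complex.Gamma θ₀ / Complex.Gamma b)]) :
    V₀.det = 1 / θ₀ := by
  have hπ : (Real.pi : ℂ) ≠ 0 := by
    exact_mod_cast Complex.ofReal_ne_zero.mpr Real.pi_ne_zero
  have hθ0 : θ₀ ≠ 0 := by simpa using hθ₀ 0
  have hSθ : Complex.sin ((Real.pi : ℂ) * θ₀) ≠ 0 := by
    rw [Complex.sin_ne_zero_iff]
    intro k h
    exact hθ₀ k (mul_left_cancel₀ hπ (by linear_combination h))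
  have hba : b - a = θ₀ := by rw [ha, hb]; ring
  have key : Complex.exp ((Real.pi : ℂ) * I * a) * Complex.sin ((Real.pi : ℂ) * b)
      - Complex.exp ((Real.pi : ℂ) * I * b) * Complex.sin ((Real.pi : ℂ) * a)
      = Complex.sin ((Real.pi : ℂ) * θ₀) := by
    rw [show (Real.pi : ℂ) * I * a = ((Real.pi : ℂ) * a) * I by ring,
      show (Real.pi : ℂ) * I * b = ((Real.pi : ℂ) * b) * I by ring,
      Complex.exp_mul_I, Complex.exp_mul_I, ← hba,
      show (Real.pi : ℂ) * (b - a) = (Real.pi : ℂ) * b - (Real.pi : ℂ) * a by ring,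
      Complex.sin_sub]
    ring
  have hGt : Complex.Gamma (-θ₀) * Complex.Gamma θ₀
      = -((Real.pi : ℂ) / (θ₀ * Complex.sin ((Real.pi : ℂ) * θ₀))) := by
    have h1 := Complex.Gamma_mul_Gamma_one_sub (-θ₀)
    rw [show (1 : ℂ) - -θ₀ = θ₀ + 1 by ring, Complex.Gamma_add_one θ₀ hθ0,
      show (Real.pi : ℂ) * -θ₀ = -((Real.pi : ℂ) * θ₀) by ring, Complex.sin_neg] at h1
    rw [div_neg, mul_left_comm] at h1
    rw [mul_comm θ₀, ← div_div, ← neg_div, ← h1]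
    field_simp
  have hGb : (Complex.Gamma (1 - b) * Complex.Gamma b)⁻¹
      = Complex.sin ((Real.pi : ℂ) * b) / (Real.pi : ℂ) := by
    rw [mul_comm, Complex.Gamma_mul_Gamma_one_sub, inv_div]
  have hGa : (Complex.Gamma (1 + a) * Complex.Gamma (-a))⁻¹
      = -(Complex.sin ((Real.pi : ℂ) * a) / (Real.pi : ℂ)) := by
    have h1 := Complex.Gamma_mul_Gamma_one_sub (-a)
    rw [show (1 : ℂ) - -a = 1 + a by ring,
      show (Real.pi : ℂ) * -a = -((Real.pi : ℂ) * a) by ring, Complex.sin_neg] at h1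
    rw [mul_comm, h1, div_neg, inv_neg, inv_div]
  rw [hV₀, Matrix.det_fin_two_of]
  calc Complex.exp ((Real.pi : ℂ) * I * a) * Complex.Gamma (-θ₀) / Complex.Gamma (1 - b)
        * -(Complex.Gamma θ₀ / Complex.Gamma b)
      - Complex.Gamma (-θ₀) / Complex.Gamma (1 + a)
        * (Complex.exp ((Real.pi : ℂ) * I * b) * Complex.Gamma θ₀ / Complex.Gamma (-a))
      = -(Complex.exp ((Real.pi : ℂ) * I * a) * (Complex.Gamma (-θ₀) * Complex.Gamma θ₀)
          * (Complex.Gamma (1 - b) * Complex.Gamma b)⁻¹)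
        - Complex.exp ((Real.pi : ℂ) * I * b) * (Complex.Gamma (-θ₀) * Complex.Gamma θ₀)
          * (Complex.Gamma (1 + a) * Complex.Gamma (-a))⁻¹ := by ring
    _ = -(Complex.exp ((Real.pi : ℂ) * I * a)
          * -((Real.pi : ℂ) / (θ₀ * Complex.sin ((Real.pi : ℂ) * θ₀)))
          * (Complex.sin ((Real.pi : ℂ) * b) / (Real.pi : ℂ)))
        - Complex.exp ((Real.pi : ℂ) * I * b)
          * -((Real.pi : ℂ) / (θ₀ * Complex.sin ((Real.pi : ℂ) * θ₀)))
          * -(Complex.sin ((Real.pi : ℂ) * a) / (Real.pi : ℂ)) := by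
        rw [hGt, hGb, hGa]
    _ = 1 / θ₀ := by
        field_simp
        linear_combination key
end

section
/- Let σ, θ_∞ ∈ ℂ and let p be a differentiable ℂ-valued function on a domain D ⊆ ℂ satisfying the Riccati equation x·p'(x) + x·p(x) + (1/2)(1 + p(x))(σ − θ_∞ + (σ + θ_∞)p(x)) = 0. Define M(x) = x·diag(0,1) + (1/2)·[[−(σ+θ_∞), −(σ−θ_∞)], [σ+θ_∞, σ−θ_∞]], N(x) = x·diag(0,1) + (1/2)·[[−(σ+θ_∞)(1+p(x)), 0], [σ+θ_∞, σ−θ_∞+(σ+θ_∞)p(x)]], and P(x) = I + p(x)Δ₊. Then the gauge identity x·P'(x) = M(x)·P(x) − P(x)·N(x) holds on D; consequently y = P(x)z transforms the system x·y' = M(x)y into x·z' = N(x)z. -/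
open Matrix

theorem stmt_13 (σ θinf : ℂ) (D : Set ℂ)
    (p p' : ℂ → ℂ)
    (hp : ∀ x ∈ D, HasDerivAt p (p' x) x)
    (hriccati : ∀ x ∈ D,
      x * p' x + x * p x + (1 / 2) * (1 + p x) * (σ - θinf + (σ + θinf) * p x) = 0)
    (M N P : ℂ → Matrix (Fin 2) (Fin 2) ℂ)
    (hM : ∀ x, M x = x • !![(0 : ℂ), 0; 0, 1] +
      (1 / 2 : ℂ) • !![-(σ + θinf), -(σ - θinf); σ + θinf, σ - θinf])
    (hN : ∀ x, N x = x • !![(0 : ℂ), 0; 0, 1] +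
      (1 / 2 : ℂ) • !![-(σ + θinf) * (1 + p x), 0;
        σ + θinf, σ - θinf + (σ + θinf) * p x])
    (hP : ∀ x, P x = 1 + p x • !![(0 : ℂ), 1; 0, 0]) :
    ∀ x ∈ D, x • (p' x • !![(0 : ℂ), 1; 0, 0]) = M x * P x - P x * N x := by
  intro x hx
  have hr := hriccati x hx
  have hxp : x * p' x = -(x * p x + (1 / 2) * (1 + p x) * (σ - θinf + (σ + θinf) * p x)) := by
    linear_combination hr
  rw [hM, hN, hP]
  ext i j
  fin_cases i <;> fin_cases j <;>
    simp [Matrix.one_fin_two, Matrix.mul_apply, Fin.sum_univ_succ] <;>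
    ring_nf <;> linear_combination hr
end
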